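/- Let a, b ∈ (0, ∞). If 9ab ≠ 4, then λ(a + b) = λ(a) + λ(b) if and only if (a − b)²(9ab − 4) = 4 + 8ab − 32a²b². In particular, whenever a, b > 0 satisfy λ(a + b) = λ(a) + λ(b), one has 4/9 ≤ ab ≤ 1/2. Moreover, for all a, b > 0: if ab > 1/2 then λ(a + b) − λ(a) − λ(b) > 0, and if ab < 4/9 then λ(a + b) − λ(a) − λ(b) < 0. -/
import Mathlib


/-!
`lam` is the gravity–capillary dispersion relation λ(x) = √(x + x³) (with g = σ = 1).
-/

noncomputable section

open Real Set

/-- The dispersion relation λ(x) = √(x + x³). -/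
def lam (x : ℝ) : ℝ := Real.sqrt (x + x ^ 3)

private lemma sq_lt_iff_aux {x y : ℝ} (hx : 0 ≤ x) (hy : 0 ≤ y) :
    x ^ 2 < y ^ 2 ↔ x < y := by
  constructor
  · intro h
    by_contra hc
    push_neg at hc
    nlinarith
  · intro h
    nlinarith

private lemma sq_eq_iff_aux {x y : ℝ} (hx : 0 ≤ x) (hy : 0 ≤ y) :
    x = y ↔ x ^ 2 = y ^ 2 := by
  constructor
  · intro h; rw [h]
  · intro h
    rw [← Real.sqrt_sq hx, h, Real.sqrt_sq hy]

/-- For a, b > 0 with 9ab ≠ 4: λ(a+b) = λ(a) + λ(b) iff (a−b)²(9ab−4) = 4 + 8ab − 32a²b²;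
whenever λ(a+b) = λ(a) + λ(b) one has 4/9 ≤ ab ≤ 1/2; moreover if ab > 1/2 then
λ(a+b) − λ(a) − λ(b) > 0 and if ab < 4/9 then λ(a+b) − λ(a) − λ(b) < 0. -/
theorem stmt7 (a b : ℝ) (ha : 0 < a) (hb : 0 < b) :
    (9 * (a * b) ≠ 4 →
      (lam (a + b) = lam a + lam b ↔
        (a - b) ^ 2 * (9 * (a * b) - 4) = 4 + 8 * (a * b) - 32 * (a * b) ^ 2)) ∧
    (lam (a + b) = lam a + lam b → 4 / 9 ≤ a * b ∧ a * b ≤ 1 / 2) ∧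
    (1 / 2 < a * b → 0 < lam (a + b) - lam a - lam b) ∧
    (a * b < 4 / 9 → lam (a + b) - lam a - lam b < 0) := by
  have ha3 : (0:ℝ) < a + a ^ 3 := by positivity
  have hb3 : (0:ℝ) < b + b ^ 3 := by positivity
  have hs3 : (0:ℝ) < (a + b) + (a + b) ^ 3 := by positivity
  have hu2 : (lam a) ^ 2 = a + a ^ 3 := Real.sq_sqrt ha3.le
  have hv2 : (lam b) ^ 2 = b + b ^ 3 := Real.sq_sqrt hb3.le
  have hw2 : (lam (a + b)) ^ 2 = (a + b) + (a + b) ^ 3 := Real.sq_sqrt hs3.le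
  have hu0 : 0 < lam a := Real.sqrt_pos.2 ha3
  have hv0 : 0 < lam b := Real.sqrt_pos.2 hb3
  have hw0 : 0 < lam (a + b) := Real.sqrt_pos.2 hs3
  have hT0 : 0 < 3 * a * b * (a + b) := by positivity
  have huv0 : (0:ℝ) ≤ 2 * (lam a * lam b) := by positivity
  -- (2 u v)^2 = 4 (a+a³)(b+b³)
  have h4AB : (2 * (lam a * lam b)) ^ 2 = 4 * ((a + a ^ 3) * (b + b ^ 3)) := by
    have : (2 * (lam a * lam b)) ^ 2 = 4 * ((lam a) ^ 2 * (lam b) ^ 2) := by ring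
    rw [this, hu2, hv2]
  -- w² - (u+v)² = T - 2uv
  have hiden : (lam (a + b)) ^ 2 - (lam a + lam b) ^ 2
      = 3 * a * b * (a + b) - 2 * (lam a * lam b) := by
    have h1 : (lam a + lam b) ^ 2 = (lam a) ^ 2 + (lam b) ^ 2 + 2 * (lam a * lam b) := by
      ring
    rw [h1, hu2, hv2, hw2]; ring
  -- T² - (2uv)² = ab · P
  have hTsq : (3 * a * b * (a + b)) ^ 2 - (2 * (lam a * lam b)) ^ 2
      = a * b * (9 * (a * b) * (a + b) ^ 2 - 4 * ((1 + a ^ 2) * (1 + b ^ 2))) := by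
    rw [h4AB]; ring
  have hab : 0 < a * b := mul_pos ha hb
  -- main equivalence
  have hmain : lam (a + b) = lam a + lam b ↔
      9 * (a * b) * (a + b) ^ 2 = 4 * ((1 + a ^ 2) * (1 + b ^ 2)) := by
    constructor
    · intro h
      have h2 : (lam (a + b)) ^ 2 = (lam a + lam b) ^ 2 := by rw [h]
      have hT : 3 * a * b * (a + b) = 2 * (lam a * lam b) := by
        have h3 := hiden
        linarith
      have hT2 : (3 * a * b * (a + b)) ^ 2 = (2 * (lam a * lam b)) ^ 2 := by rw [hT]
      have : a * b * (9 * (a * b) * (a + b) ^ 2 - 4 * ((1 + a ^ 2) * (1 + b ^ 2))) = 0 := by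
        rw [← hTsq]; linarith
      have := mul_eq_zero.mp this
      rcases this with h' | h'
      · exact absurd h' (ne_of_gt hab)
      · linarith
    · intro h
      have hT2 : (3 * a * b * (a + b)) ^ 2 = (2 * (lam a * lam b)) ^ 2 := by
        linear_combination hTsq + a * b * h
      have hT : 3 * a * b * (a + b) = 2 * (lam a * lam b) :=
        (sq_eq_iff_aux hT0.le huv0).2 hT2
      have h2 : (lam (a + b)) ^ 2 = (lam a + lam b) ^ 2 := by
        have h3 := hiden
        linarith
      exact (sq_eq_iff_aux hw0.le (by positivity)).2 h2
  refine ⟨?_, ?_, ?_, ?_⟩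
  · intro _
    rw [hmain]
    constructor
    · intro h; linear_combination h
    · intro h; linear_combination h
  · intro h
    have hP : 9 * (a * b) * (a + b) ^ 2 = 4 * ((1 + a ^ 2) * (1 + b ^ 2)) := hmain.1 h
    have hid2 : (a + b) ^ 2 * (9 * (a * b) - 4) = 4 * (1 - a * b) ^ 2 := by
      linear_combination hP
    have h49 : 4 / 9 ≤ a * b := by
      by_contra hc
      push_neg at hc
      have hneg : (a + b) ^ 2 * (9 * (a * b) - 4) < 0 :=
        mul_neg_of_pos_of_neg (by positivity) (by linarith)
      have : (0:ℝ) ≤ 4 * (1 - a * b) ^ 2 := by positivity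
      linarith
    refine ⟨h49, ?_⟩
    have h3 : 0 ≤ (a - b) ^ 2 * (9 * (a * b) - 4) :=
      mul_nonneg (sq_nonneg _) (by linarith)
    have h4 : (a - b) ^ 2 * (9 * (a * b) - 4) = 4 + 8 * (a * b) - 32 * (a * b) ^ 2 := by
      linear_combination hP
    nlinarith [hab, h3, h4]
  · intro hp
    have hP : 0 < a * b * (9 * (a * b) * (a + b) ^ 2 - 4 * ((1 + a ^ 2) * (1 + b ^ 2))) := by
      have hid3 : 9 * (a * b) * (a + b) ^ 2 - 4 * ((1 + a ^ 2) * (1 + b ^ 2))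
          = (a - b) ^ 2 * (9 * (a * b) - 4) + 4 * (4 * (a * b) + 1) * (2 * (a * b) - 1) := by
        ring
      have h1 : (0:ℝ) ≤ (a - b) ^ 2 * (9 * (a * b) - 4) :=
        mul_nonneg (sq_nonneg _) (by linarith)
      have h2 : (0:ℝ) < 4 * (4 * (a * b) + 1) * (2 * (a * b) - 1) := by
        have : (0:ℝ) < 4 * (4 * (a * b) + 1) := by linarith
        exact mul_pos this (by linarith)
      exact mul_pos hab (by rw [hid3]; linarith)
    have hT2 : (2 * (lam a * lam b)) ^ 2 < (3 * a * b * (a + b)) ^ 2 := by linarith [hTsq]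
    have hT : 2 * (lam a * lam b) < 3 * a * b * (a + b) :=
      (sq_lt_iff_aux huv0 hT0.le).1 hT2
    have h2 : (lam a + lam b) ^ 2 < (lam (a + b)) ^ 2 := by
      have h3 := hiden
      linarith
    have := (sq_lt_iff_aux (by positivity : (0:ℝ) ≤ lam a + lam b) hw0.le).1 h2
    linarith
  · intro hp
    have hP : a * b * (9 * (a * b) * (a + b) ^ 2 - 4 * ((1 + a ^ 2) * (1 + b ^ 2))) < 0 := by
      have hid : 9 * (a * b) * (a + b) ^ 2 - 4 * ((1 + a ^ 2) * (1 + b ^ 2))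
          = (a + b) ^ 2 * (9 * (a * b) - 4) - 4 * (1 - a * b) ^ 2 := by ring
      have h1 : (a + b) ^ 2 * (9 * (a * b) - 4) < 0 :=
        mul_neg_of_pos_of_neg (by positivity) (by linarith)
      have h2 : (0:ℝ) ≤ 4 * (1 - a * b) ^ 2 := by positivity
      exact mul_neg_of_pos_of_neg hab (by rw [hid]; linarith)
    have hT2 : (3 * a * b * (a + b)) ^ 2 < (2 * (lam a * lam b)) ^ 2 := by linarith [hTsq]
    have hT : 3 * a * b * (a + b) < 2 * (lam a * lam b) :=
      (sq_lt_iff_aux hT0.le huv0).1 hT2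
    have h2 : (lam (a + b)) ^ 2 < (lam a + lam b) ^ 2 := by
      have h3 := hiden
      linarith
    have := (sq_lt_iff_aux hw0.le (by positivity : (0:ℝ) ≤ lam a + lam b)).1 h2
    linarith

end
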